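/- arXiv:1908.05800 — 3 statements merged into one kernel-verified Lean document; each statement's English description precedes it below -/
import Mathlib

section
/- (Theorem 4.3, stability) Let k > 0, p ∈ ℝ³, and let F and F_δ be bounded linear operators on L²(S²,ℂ³) such that ‖F − F_δ‖ ≤ δ‖F‖ for some δ ≥ 0 (operator norms). Then for every y ∈ ℝ³, ∫_{S²} |p·(Fφ_y)(x̂)|² dσ(x̂) − ∫_{S²} |p·(F_δφ_y)(x̂)|² dσ(x̂) ≤ 4π |p|⁴ ‖F‖² (δ² + 2δ). -/
open MeasureTheory Metric Complex

noncomputable section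

abbrev R3 : Type := EuclideanSpace ℝ (Fin 3)
abbrev C3 : Type := EuclideanSpace ℂ (Fin 3)
abbrev S2 : Type := Metric.sphere (0 : R3) 1

/-- The surface measure on the unit sphere `S²` (total mass `4π`). -/
def σS : Measure S2 := (volume : Measure R3).toSphere

/-- Componentwise complexification of a real vector. -/
def cm (x : R3) : C3 := WithLp.toLp 2 (fun i => (x i : ℂ))

/-- Real dot product on `ℝ³`. -/
def dotR (a b : R3) : ℝ := ∑ i, a i * b i

/-- Bilinear (unconjugated) dot product on `ℂ³`. -/
def dotc (a b : C3) : ℂ := ∑ i, a i * b i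

/-- Cross product on `ℂ³`, extended bilinearly. -/
def crossc (a b : C3) : C3 := WithLp.toLp 2 (crossProduct a b)

/-- Hermitian pairing `a · conj b`. -/
def hdot (a b : C3) : ℂ := ∑ i, a i * (starRingEnd ℂ) (b i)

/-- The test function `φ_y(d) = (d×p)×d e^{−ik d·y}`. -/
def phiy (k : ℝ) (p y : R3) (d : S2) : C3 :=
  Complex.exp (-(Complex.I * k * (dotR (d : R3) y))) •
    crossc (crossc (cm (d : R3)) (cm p)) (cm (d : R3))

/-- The Herglotz wave function `(Hg)(x) = ∫_{S²} g(d) e^{ik x·d} dσ(d)`. -/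
def herg (k : ℝ) (g : S2 → C3) (x : R3) : C3 :=
  ∫ d : S2, Complex.exp (Complex.I * k * (dotR x (d : R3))) • g d ∂σS

open Classical in
/-- The `L²` class of a function (`0` if the function is not square integrable). -/
def toL2 {α : Type} [MeasurableSpace α] (μ : Measure α) (f : α → C3) : Lp C3 2 μ :=
  if h : MemLp f 2 μ then h.toLp f else 0

/-- `(H^*f)(d) = d × (∫_Ω f(x) e^{−ik x·d} dx) × d`. -/
def hergSt (k : ℝ) (Ω : Set R3) (f : R3 → C3) (d : S2) : C3 :=
  crossc (crossc (cm (d : R3))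
    (∫ x in Ω, Complex.exp (-(Complex.I * k * (dotR x (d : R3)))) • f x)) (cm (d : R3))

/-- The operator `F` built from the factorization `F = H^* T H`:
`(Fg)(d) = d × (∫_Ω (T(Hg))(x) e^{−ik x·d} dx) × d`. -/
def Fop (k : ℝ) (Ω : Set R3)
    (T : Lp C3 2 (volume.restrict Ω) →L[ℂ] Lp C3 2 (volume.restrict Ω))
    (g : S2 → C3) (d : S2) : C3 :=
  crossc (crossc (cm (d : R3))
    (∫ x in Ω, Complex.exp (-(Complex.I * k * (dotR x (d : R3)))) •
      (T (toL2 (volume.restrict Ω) (herg k g))) x)) (cm (d : R3))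

/-- The OSM imaging functional `I_OSM(y) = ∫_{S²} |p·(Fφ_y)(x̂)|² dσ(x̂)`. -/
def IOSM (k : ℝ) (Ω : Set R3)
    (T : Lp C3 2 (volume.restrict Ω) →L[ℂ] Lp C3 2 (volume.restrict Ω))
    (p y : R3) : ℝ :=
  ∫ xh : S2, ‖dotc (cm p) (Fop k Ω T (phiy k p y) xh)‖ ^ 2 ∂σS

/-- The DSM imaging functional `I_DSM(y) = |⟨Fφ_y, φ_y⟩_{L²(S²)}|`. -/
def IDSM (k : ℝ) (Ω : Set R3)
    (T : Lp C3 2 (volume.restrict Ω) →L[ℂ] Lp C3 2 (volume.restrict Ω))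
    (p y : R3) : ℝ :=
  ‖∫ d : S2, hdot (Fop k Ω T (phiy k p y) d) (phiy k p y d) ∂σS‖

/-- The set `H(L²_t(S²)) ⊂ L²(Ω,ℂ³)`: images under the Herglotz operator of square
integrable tangential fields. -/
def ranHt (k : ℝ) (Ω : Set R3) : Set (Lp C3 2 (volume.restrict Ω)) :=
  {h | ∃ g : S2 → C3, MemLp g 2 σS ∧ (∀ᵐ (d : S2) ∂σS, dotc (cm d.val) (g d) = 0) ∧
    h = toL2 (volume.restrict Ω) (herg k g)}

/-! ### Auxiliary lemmas -/

instance : IsFiniteMeasure σS := by unfold σS; infer_instance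

lemma sigmaS_univ : σS Set.univ = ENNReal.ofReal (4 * Real.pi) := by
  rw [σS, Measure.toSphere_apply_univ, EuclideanSpace.volume_ball]
  have h3 : (Module.finrank ℝ R3) = 3 := finrank_euclideanSpace_fin
  have hg : Real.Gamma ((Fintype.card (Fin 3) : ℝ) / 2 + 1) = 3 / 4 * Real.sqrt Real.pi := by
    have : ((Fintype.card (Fin 3) : ℝ)) / 2 + 1 = 3/2 + 1 := by norm_num
    rw [this, Real.Gamma_add_one (by norm_num)]
    have : (3:ℝ)/2 = 1/2 + 1 := by norm_num
    rw [this, Real.Gamma_add_one (by norm_num), Real.Gamma_one_half_eq]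
    ring
  rw [hg, h3]
  simp only [Fintype.card_fin, one_pow, ENNReal.ofReal_one]
  rw [one_mul]
  have hπ : Real.sqrt Real.pi ^ 3 / (3 / 4 * Real.sqrt Real.pi) = 4 / 3 * Real.pi := by
    have h := Real.sq_sqrt Real.pi_pos.le
    have hs : Real.sqrt Real.pi > 0 := Real.sqrt_pos.2 Real.pi_pos
    field_simp
    nlinarith [h, hs]
  rw [hπ]
  have h33 : ((3:ℕ) : ENNReal) = ENNReal.ofReal 3 := by simp
  rw [h33, ← ENNReal.ofReal_mul (by norm_num)]
  congr 1; ring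

def crossR (a b : R3) : R3 := WithLp.toLp 2 (crossProduct a b)

lemma crossR0 (a b : R3) : crossR a b 0 = a 1 * b 2 - a 2 * b 1 := by simp [crossR, cross_apply]
lemma crossR1 (a b : R3) : crossR a b 1 = a 2 * b 0 - a 0 * b 2 := by simp [crossR, cross_apply]
lemma crossR2 (a b : R3) : crossR a b 2 = a 0 * b 1 - a 1 * b 0 := by simp [crossR, cross_apply]

lemma norm_cm (x : R3) : ‖cm x‖ = ‖x‖ := by
  rw [EuclideanSpace.norm_eq, EuclideanSpace.norm_eq]
  congr 1
  refine Finset.sum_congr rfl fun i _ => ?_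
  simp [cm]

lemma crossc_cm (a b : R3) : crossc (cm a) (cm b) = cm (crossR a b) := by
  ext i
  fin_cases i <;> simp [crossc, crossR, cm, cross_apply]

lemma euclid_norm_sq (x : R3) : ‖x‖^2 = x 0^2 + x 1^2 + x 2^2 := by
  rw [EuclideanSpace.norm_eq, Real.sq_sqrt (by positivity), Fin.sum_univ_three]
  simp [Real.norm_eq_abs, sq_abs]

lemma norm_cross_le (a b : R3) : ‖crossR a b‖ ≤ ‖a‖ * ‖b‖ := by
  have h2 : ‖crossR a b‖^2 ≤ (‖a‖*‖b‖)^2 := by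
    rw [mul_pow, euclid_norm_sq, euclid_norm_sq, euclid_norm_sq, crossR0, crossR1, crossR2]
    nlinarith [sq_nonneg (a 0 * b 0 + a 1 * b 1 + a 2 * b 2)]
  have := Real.sqrt_le_sqrt h2
  rwa [Real.sqrt_sq (norm_nonneg _), Real.sqrt_sq (by positivity)] at this

lemma norm_phiy_le (k : ℝ) (p y : R3) (d : S2) : ‖phiy k p y d‖ ≤ ‖p‖ := by
  have hd : ‖(d : R3)‖ = 1 := norm_eq_of_mem_sphere d
  rw [phiy, norm_smul, crossc_cm, crossc_cm, norm_cm]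
  have he : ‖Complex.exp (-(Complex.I * k * (dotR (d : R3) y)))‖ = 1 := by
    rw [Complex.norm_exp]
    simp
  rw [he, one_mul]
  calc ‖crossR (crossR (d : R3) p) (d : R3)‖
      ≤ ‖crossR (d : R3) p‖ * ‖(d : R3)‖ := norm_cross_le _ _
    _ ≤ (‖(d : R3)‖ * ‖p‖) * ‖(d : R3)‖ := by
        have := norm_cross_le (d : R3) p
        nlinarith [norm_nonneg ((d : R3))]
    _ = ‖p‖ := by rw [hd]; ring

lemma dotc_eq_inner (p : R3) (z : C3) : dotc (cm p) z = @inner ℂ _ _ (cm p) z := by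
  rw [dotc, PiLp.inner_apply]
  refine Finset.sum_congr rfl fun i _ => ?_
  rw [RCLike.inner_apply]
  simp [cm, Complex.conj_ofReal, mul_comm]

lemma dotc_le (p : R3) (z : C3) : ‖dotc (cm p) z‖ ≤ ‖p‖ * ‖z‖ := by
  rw [dotc_eq_inner, ← norm_cm p]
  exact norm_inner_le_norm _ _

lemma dotc_sub (q z1 z2 : C3) : dotc q (z1 - z2) = dotc q z1 - dotc q z2 := by
  simp [dotc, mul_sub, Finset.sum_sub_distrib]

lemma hcoordS2 (i : Fin 3) : Continuous fun d : S2 => (d : R3) i :=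
  ((EuclideanSpace.proj i : R3 →L[ℝ] ℝ).continuous).comp continuous_subtype_val

attribute [local fun_prop] hcoordS2

lemma continuous_c3 {X : Type*} [TopologicalSpace X] (f : X → C3)
    (h : ∀ i, Continuous fun x => f x i) : Continuous f :=
  (PiLp.continuous_toLp 2 (fun _ : Fin 3 => ℂ)).comp (continuous_pi h)

lemma continuous_phiy (k : ℝ) (p y : R3) : Continuous (phiy k p y) := by
  have heq : phiy k p y = fun d : S2 =>
      Complex.exp (-(Complex.I * k * (dotR (d : R3) y))) •
        cm (crossR (crossR (d : R3) p) (d : R3)) := by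
    funext d
    rw [phiy, crossc_cm, crossc_cm]
  rw [heq]
  have he : Continuous fun d : S2 => Complex.exp (-(Complex.I * k * (dotR (d : R3) y))) := by
    simp only [dotR, Fin.sum_univ_three]
    fun_prop
  have hV : Continuous fun d : S2 => cm (crossR (crossR (d : R3) p) (d : R3)) := by
    apply continuous_c3
    intro i
    have hcont : ∀ j, Continuous fun d : S2 => (crossR (crossR (d : R3) p) (d : R3)) j := by
      intro j
      fin_cases j
      · show Continuous fun d : S2 => (crossR (crossR (d : R3) p) (d : R3)) 0
        simp only [crossR0, crossR1, crossR2]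
        fun_prop
      · show Continuous fun d : S2 => (crossR (crossR (d : R3) p) (d : R3)) 1
        simp only [crossR0, crossR1, crossR2]
        fun_prop
      · show Continuous fun d : S2 => (crossR (crossR (d : R3) p) (d : R3)) 2
        simp only [crossR0, crossR1, crossR2]
        fun_prop
    exact Complex.continuous_ofReal.comp (hcont i)
  exact he.smul hV

lemma memLp_phiy (k : ℝ) (p y : R3) : MemLp (phiy k p y) 2 σS :=
  MemLp.of_bound (continuous_phiy k p y).aestronglyMeasurable ‖p‖
    (Filter.Eventually.of_forall (norm_phiy_le k p y))

lemma integral_norm_sq_L2 (f : Lp C3 2 σS) : ∫ x, ‖f x‖^2 ∂σS = ‖f‖^2 := by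
  calc ∫ x, ‖f x‖^2 ∂σS
      = ∫ x, RCLike.re (@inner ℂ _ _ (f x) (f x)) ∂σS := by
        refine integral_congr_ae (Filter.Eventually.of_forall fun x => ?_)
        exact (inner_self_eq_norm_sq (𝕜 := ℂ) (f x)).symm
    _ = RCLike.re (∫ x, (@inner ℂ _ _ (f x) (f x)) ∂σS) :=
        integral_re (L2.integrable_inner (𝕜 := ℂ) f f)
    _ = RCLike.re (@inner ℂ _ _ f f) := by rw [← L2.inner_def]
    _ = ‖f‖^2 := inner_self_eq_norm_sq (𝕜 := ℂ) f

lemma integrable_norm_sq_L2 (f : Lp C3 2 σS) : Integrable (fun x => ‖f x‖^2) σS := by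
  have h := (L2.integrable_inner (𝕜 := ℂ) f f).re
  exact h.congr (Filter.Eventually.of_forall fun x => inner_self_eq_norm_sq (𝕜 := ℂ) (f x))

lemma continuous_dotc (p : R3) : Continuous fun z : C3 => dotc (cm p) z := by
  simp only [dotc_eq_inner]
  exact continuous_const.inner continuous_id

lemma integrable_dotc_sq (p : R3) (g : Lp C3 2 σS) :
    Integrable (fun x => ‖dotc (cm p) (g x)‖^2) σS := by
  have hm : AEStronglyMeasurable (fun x => ‖dotc (cm p) (g x)‖^2) σS :=
    (((continuous_dotc p).norm.pow 2).comp_aestronglyMeasurable (Lp.aestronglyMeasurable g))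
  have hb : Integrable (fun x => ‖p‖^2 * ‖g x‖^2) σS := (integrable_norm_sq_L2 g).const_mul _
  refine hb.mono' hm (Filter.Eventually.of_forall fun x => ?_)
  rw [Real.norm_eq_abs, _root_.abs_of_nonneg (by positivity)]
  have h := dotc_le p (g x)
  nlinarith [norm_nonneg (dotc (cm p) (g x)), norm_nonneg (g x), norm_nonneg p]

set_option maxHeartbeats 2000000 in
/-- **Theorem 4.3 (stability).** -/
theorem stmt2 (k : ℝ) (hk : 0 < k) (p : R3)
    (F Fδ : Lp C3 2 σS →L[ℂ] Lp C3 2 σS) (δ : ℝ) (hδ : 0 ≤ δ)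
    (hnoise : ‖F - Fδ‖ ≤ δ * ‖F‖) (y : R3) :
    (∫ xh : S2, ‖dotc (cm p) ((F (toL2 σS (phiy k p y))) xh)‖ ^ 2 ∂σS) -
      (∫ xh : S2, ‖dotc (cm p) ((Fδ (toL2 σS (phiy k p y))) xh)‖ ^ 2 ∂σS) ≤
      4 * Real.pi * ‖p‖ ^ 4 * ‖F‖ ^ 2 * (δ ^ 2 + 2 * δ) := by
  rcases eq_or_lt_of_le hδ with h0 | hδpos
  · -- δ = 0 : then F = Fδ and both sides vanish
    have hFF : F = Fδ := by
      rw [← h0, zero_mul] at hnoise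
      have := norm_le_zero_iff.mp hnoise
      exact sub_eq_zero.mp this
    rw [hFF, sub_self, ← h0]
    positivity
  -- main case : δ > 0
  set φ : Lp C3 2 σS := toL2 σS (phiy k p y) with hφdef
  have hφmem : MemLp (phiy k p y) 2 σS := memLp_phiy k p y
  have hφcoe : (φ : S2 → C3) =ᵐ[σS] phiy k p y := by
    rw [hφdef, toL2, dif_pos hφmem]
    exact MemLp.coeFn_toLp hφmem
  have hφsq : ‖φ‖^2 ≤ 4 * Real.pi * ‖p‖^2 := by
    have hb : ∀ᵐ d ∂σS, ‖φ d‖ ≤ ‖p‖ := by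
      filter_upwards [hφcoe] with d hd
      rw [hd]; exact norm_phiy_le k p y d
    have hbd := Lp.norm_le_of_ae_bound (p := (2 : ENNReal)) (norm_nonneg p) hb
    have hμ : (measureUnivNNReal σS : ℝ) = 4 * Real.pi := by
      rw [measureUnivNNReal, sigmaS_univ]
      show (ENNReal.ofReal (4 * Real.pi)).toReal = 4 * Real.pi
      exact ENNReal.toReal_ofReal (by positivity)
    have hexp : ((2 : ENNReal).toReal)⁻¹ = (1:ℝ)/2 := by norm_num
    rw [hexp, hμ] at hbd
    have h4π : (0:ℝ) ≤ 4 * Real.pi := by positivity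
    have hsq : ((4 * Real.pi) ^ ((1:ℝ)/2))^2 = 4 * Real.pi := by
      rw [← Real.rpow_natCast ((4 * Real.pi) ^ ((1:ℝ)/2)) 2, ← Real.rpow_mul h4π]
      norm_num
    calc ‖φ‖^2 ≤ ((4 * Real.pi) ^ ((1:ℝ)/2) * ‖p‖)^2 := by
          have h1 : (0:ℝ) ≤ (4 * Real.pi) ^ ((1:ℝ)/2) * ‖p‖ :=
            mul_nonneg (Real.rpow_nonneg h4π _) (norm_nonneg p)
          nlinarith [norm_nonneg φ]
      _ = 4 * Real.pi * ‖p‖^2 := by rw [mul_pow, hsq]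
  set u : Lp C3 2 σS := F φ with hudef
  set v : Lp C3 2 σS := Fδ φ with hvdef
  set w : Lp C3 2 σS := (F - Fδ) φ with hwdef
  have hw_uv : w = u - v := by rw [hwdef, ContinuousLinearMap.sub_apply]
  have hwcoe : ∀ᵐ x ∂σS, w x = u x - v x := by
    rw [hw_uv]; exact Lp.coeFn_sub u v
  have hIu := integrable_norm_sq_L2 u
  have hIw := integrable_norm_sq_L2 w
  have hA := integrable_dotc_sq p u
  have hB := integrable_dotc_sq p v
  -- pointwise inequality
  have hpt : ∀ᵐ x ∂σS, ‖dotc (cm p) (u x)‖^2 - ‖dotc (cm p) (v x)‖^2 ≤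
      ‖p‖^2 * (δ * ‖u x‖^2 + δ⁻¹ * ‖w x‖^2) := by
    filter_upwards [hwcoe] with x hx
    set a := ‖dotc (cm p) (u x)‖ with hadef
    set b := ‖dotc (cm p) (v x)‖ with hbdef
    set c := ‖dotc (cm p) (u x - v x)‖ with hcdef
    set U := ‖u x‖ with hUdef
    set W := ‖w x‖ with hWdef
    have hWc : W = ‖u x - v x‖ := by rw [hWdef, hx]
    have ha0 : 0 ≤ a := norm_nonneg _
    have hb0 : 0 ≤ b := norm_nonneg _
    have hc0 : 0 ≤ c := norm_nonneg _
    have hU0 : 0 ≤ U := norm_nonneg _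
    have hW0 : 0 ≤ W := norm_nonneg _
    have htri : a ≤ b + c := by
      have : dotc (cm p) (u x) = dotc (cm p) (v x) + dotc (cm p) (u x - v x) := by
        rw [dotc_sub]; ring
      rw [hadef, this]
      exact norm_add_le _ _
    have haU : a ≤ ‖p‖ * U := dotc_le p (u x)
    have hcW : c ≤ ‖p‖ * W := by rw [hWc]; exact dotc_le p (u x - v x)
    have h1 : a^2 - b^2 ≤ 2*a*c := by
      rcases le_or_gt a b with h | h
      · nlinarith
      · nlinarith [mul_nonneg hc0 (le_of_lt (sub_pos.2 h))]
    have h2 : 2*a*c ≤ 2*‖p‖^2*U*W := by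
      nlinarith [mul_le_mul haU hcW hc0 (mul_nonneg (norm_nonneg p) hU0)]
    have h3 : 2*U*W ≤ δ*U^2 + δ⁻¹*W^2 := by
      rw [← mul_le_mul_iff_of_pos_left hδpos]
      have hid : δ * (δ*U^2 + δ⁻¹*W^2) = δ^2*U^2 + W^2 := by
        field_simp
      rw [hid]
      nlinarith [sq_nonneg (δ*U - W)]
    nlinarith [sq_nonneg (norm p), norm_nonneg p]
  -- integrate
  have hRHSint : Integrable (fun x => ‖p‖^2 * (δ * ‖u x‖^2 + δ⁻¹ * ‖w x‖^2)) σS :=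
    (((hIu.const_mul δ).add (hIw.const_mul δ⁻¹)).const_mul (‖p‖^2))
  have hstep1 : (∫ x, ‖dotc (cm p) (u x)‖^2 ∂σS) - (∫ x, ‖dotc (cm p) (v x)‖^2 ∂σS) ≤
      ‖p‖^2 * (δ * ‖u‖^2 + δ⁻¹ * ‖w‖^2) := by
    rw [← integral_sub hA hB]
    have h := integral_mono_ae (hA.sub hB) hRHSint hpt
    refine h.trans_eq ?_
    rw [integral_const_mul, integral_add (hIu.const_mul δ) (hIw.const_mul δ⁻¹),
      integral_const_mul, integral_const_mul, integral_norm_sq_L2, integral_norm_sq_L2]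
  refine hstep1.trans ?_
  -- norm bounds
  have hunorm : ‖u‖ ≤ ‖F‖ * ‖φ‖ := F.le_opNorm φ
  have hwnorm : ‖w‖ ≤ δ * ‖F‖ * ‖φ‖ := by
    calc ‖w‖ ≤ ‖F - Fδ‖ * ‖φ‖ := (F - Fδ).le_opNorm φ
      _ ≤ δ * ‖F‖ * ‖φ‖ := by
          have := norm_nonneg φ
          nlinarith [norm_nonneg (F - Fδ)]
  have hu2 : ‖u‖^2 ≤ ‖F‖^2 * ‖φ‖^2 := by
    nlinarith [norm_nonneg u, norm_nonneg φ, (F : Lp C3 2 σS →L[ℂ] Lp C3 2 σS).opNorm_nonneg]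
  have hw2 : ‖w‖^2 ≤ δ^2 * ‖F‖^2 * ‖φ‖^2 := by
    nlinarith [norm_nonneg w, norm_nonneg φ, F.opNorm_nonneg, mul_nonneg (mul_nonneg hδ F.opNorm_nonneg) (norm_nonneg φ)]
  have hδinv : δ⁻¹ * δ^2 = δ := by rw [sq, ← mul_assoc, inv_mul_cancel₀ hδpos.ne', one_mul]
  have hfin : δ * ‖u‖^2 + δ⁻¹ * ‖w‖^2 ≤ 2 * δ * ‖F‖^2 * ‖φ‖^2 := by
    have h1 : δ * ‖u‖^2 ≤ δ * (‖F‖^2 * ‖φ‖^2) := by nlinarith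
    have h2 : δ⁻¹ * ‖w‖^2 ≤ δ⁻¹ * (δ^2 * ‖F‖^2 * ‖φ‖^2) := by
      have := (inv_pos.2 hδpos).le
      nlinarith
    have h3 : δ⁻¹ * (δ^2 * ‖F‖^2 * ‖φ‖^2) = δ * ‖F‖^2 * ‖φ‖^2 := by
      rw [show δ⁻¹ * (δ^2 * ‖F‖^2 * ‖φ‖^2) = (δ⁻¹ * δ^2) * ‖F‖^2 * ‖φ‖^2 by ring, hδinv]
    linarith
  calc ‖p‖^2 * (δ * ‖u‖^2 + δ⁻¹ * ‖w‖^2)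
      ≤ ‖p‖^2 * (2 * δ * ‖F‖^2 * ‖φ‖^2) := by nlinarith [norm_nonneg p, sq_nonneg (norm p)]
    _ ≤ ‖p‖^2 * (2 * δ * ‖F‖^2 * (4 * Real.pi * ‖p‖^2)) := by
        have hc : (0:ℝ) ≤ 2 * δ * ‖F‖^2 := by positivity
        nlinarith [sq_nonneg (norm p), mul_le_mul_of_nonneg_left hφsq hc]
    _ ≤ 4 * Real.pi * ‖p‖ ^ 4 * ‖F‖ ^ 2 * (δ ^ 2 + 2 * δ) := by
        nlinarith [sq_nonneg (norm p), sq_nonneg δ, Real.pi_pos.le, sq_nonneg (‖p‖^2),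
          mul_nonneg (mul_nonneg (mul_nonneg (by positivity : (0:ℝ) ≤ 4*Real.pi) (sq_nonneg (‖p‖^2))) (sq_nonneg ‖F‖)) (sq_nonneg δ)]
end
end

section
/- (Theorem 4.5, equivalence of OSM and DSM) Let k > 0, let p ∈ ℝ³ with p ≠ 0, let Ω ⊂ ℝ³ be a bounded measurable set of positive Lebesgue measure, and let T be a bounded linear operator on L²(Ω,ℂ³) such that |⟨Th,h⟩| ≥ c‖h‖² for some c > 0 and all h in the L²-closure of H(L²_t(S²)). Then there exist positive constants c₁ and c₂ such that for every y ∈ ℝ³: c₁ · I_OSM(y) ≤ I_DSM(y) ≤ c₂ · √(I_OSM(y)). -/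
open MeasureTheory Metric Complex

noncomputable section

/-! ### Auxiliary lemmas -/

section Aux

lemma dotc_comm (a b : C3) : dotc a b = dotc b a := by
  simp [dotc, mul_comm]

lemma dotc_smul_right (a b : C3) (s : ℂ) : dotc a (s • b) = s * dotc a b := by
  simp only [dotc, PiLp.smul_apply, smul_eq_mul, Finset.mul_sum]
  apply Finset.sum_congr rfl; intro i _; ring

lemma dotc_smul_left (a b : C3) (s : ℂ) : dotc (s • a) b = s * dotc a b := by
  rw [dotc_comm, dotc_smul_right, dotc_comm]

lemma dotc_sub_left (a b w : C3) : dotc (a - b) w = dotc a w - dotc b w := by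
  simp only [dotc, PiLp.sub_apply]
  rw [← Finset.sum_sub_distrib]
  apply Finset.sum_congr rfl; intro i _
  ring

lemma algA (u w q : C3) : dotc q (crossc (crossc u w) u) = dotc (crossc (crossc u q) u) w := by
  simp [dotc, crossc, crossProduct, Fin.sum_univ_three]
  ring

lemma algB (u w : C3) : dotc u (crossc (crossc u w) u) = 0 := by
  simp [dotc, crossc, crossProduct, Fin.sum_univ_three]
  ring

lemma tri (u w : C3) : crossc (crossc u w) u = dotc u u • w - dotc u w • u := by
  ext i
  fin_cases i <;>
    simp [dotc, crossc, crossProduct, Fin.sum_univ_three] <;> ring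

lemma comp_le (v : C3) (i : Fin 3) : ‖v i‖ ≤ ‖v‖ := by
  rw [EuclideanSpace.norm_eq]
  rw [show ‖v i‖ = Real.sqrt (‖v i‖^2) by rw [Real.sqrt_sq (norm_nonneg _)]]
  apply Real.sqrt_le_sqrt
  exact Finset.single_le_sum (f := fun j => ‖v j‖^2) (fun j _ => by positivity) (Finset.mem_univ i)

lemma norm_le_of_comp (v : C3) (C : ℝ) (h : ∀ i, ‖v i‖ ≤ C) : ‖v‖ ≤ 2 * C := by
  have hC : 0 ≤ C := le_trans (norm_nonneg _) (h 0)
  rw [EuclideanSpace.norm_eq]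
  have : ∑ i : Fin 3, ‖v i‖^2 ≤ 3 * C^2 := by
    rw [Fin.sum_univ_three]
    have h0 := h 0; have h1 := h 1; have h2 := h 2
    nlinarith [norm_nonneg (v 0), norm_nonneg (v 1), norm_nonneg (v 2)]
  calc Real.sqrt (∑ i : Fin 3, ‖v i‖^2) ≤ Real.sqrt (3 * C^2) := Real.sqrt_le_sqrt this
    _ ≤ Real.sqrt ((2*C)^2) := Real.sqrt_le_sqrt (by nlinarith)
    _ = 2 * C := Real.sqrt_sq (by linarith)

lemma cross_comp_le (a b : C3) (i : Fin 3) : ‖crossc a b i‖ ≤ 2 * (‖a‖ * ‖b‖) := by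
  have ha : ∀ j, ‖a j‖ ≤ ‖a‖ := comp_le a
  have hb : ∀ j, ‖b j‖ ≤ ‖b‖ := comp_le b
  have key : ∀ (j₁ j₂ j₃ j₄ : Fin 3), ‖a j₁ * b j₂ - a j₃ * b j₄‖ ≤ 2 * (‖a‖ * ‖b‖) := by
    intro j₁ j₂ j₃ j₄
    calc ‖a j₁ * b j₂ - a j₃ * b j₄‖ ≤ ‖a j₁ * b j₂‖ + ‖a j₃ * b j₄‖ := norm_sub_le _ _
      _ = ‖a j₁‖ * ‖b j₂‖ + ‖a j₃‖ * ‖b j₄‖ := by simp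
      _ ≤ ‖a‖ * ‖b‖ + ‖a‖ * ‖b‖ := by
          gcongr <;> [exact ha _; exact hb _; exact ha _; exact hb _]
      _ = 2 * (‖a‖ * ‖b‖) := by ring
  fin_cases i <;> simpa [crossc, crossProduct] using key _ _ _ _

lemma norm_crossc_le (a b : C3) : ‖crossc a b‖ ≤ 4 * ‖a‖ * ‖b‖ := by
  have := norm_le_of_comp (crossc a b) (2 * (‖a‖ * ‖b‖)) (cross_comp_le a b)
  linarith

lemma norm_dotc_le (a b : C3) : ‖dotc a b‖ ≤ 3 * ‖a‖ * ‖b‖ := by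
  have ha := comp_le a; have hb := comp_le b
  calc ‖dotc a b‖ ≤ ∑ i : Fin 3, ‖a i * b i‖ := norm_sum_le _ _
    _ ≤ ∑ i : Fin 3, ‖a‖ * ‖b‖ := by
        apply Finset.sum_le_sum; intro i _
        rw [norm_mul]; exact mul_le_mul (ha i) (hb i) (norm_nonneg _) (norm_nonneg _)
    _ = 3 * ‖a‖ * ‖b‖ := by simp [Fin.sum_univ_three]; ring

def dotCLM (a : C3) : C3 →L[ℂ] ℂ := ∑ i, a i • (EuclideanSpace.proj i)

lemma dotCLM_apply (a b : C3) : dotCLM a b = dotc a b := by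
  simp [dotCLM, dotc, ContinuousLinearMap.sum_apply]

lemma dotc_integral {α : Type} [MeasurableSpace α] (μ : Measure α) (a : C3) (f : α → C3)
    (hf : Integrable f μ) : dotc a (∫ x, f x ∂μ) = ∫ x, dotc a (f x) ∂μ := by
  rw [← dotCLM_apply, ← ContinuousLinearMap.integral_comp_comm _ hf]
  simp only [dotCLM_apply]

lemma cont_cm : Continuous cm :=
  (PiLp.continuous_toLp 2 _).comp
    (continuous_pi fun i => Complex.continuous_ofReal.comp ((continuous_apply i).comp (PiLp.continuous_ofLp 2 _)))

lemma cont_crossc : Continuous (fun ab : C3 × C3 => crossc ab.1 ab.2) := by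
  unfold crossc
  apply (PiLp.continuous_toLp 2 _).comp
  apply continuous_pi; intro i
  fin_cases i <;> simp [crossProduct] <;> fun_prop

lemma cont_dotR : Continuous (fun xy : R3 × R3 => dotR xy.1 xy.2) := by
  unfold dotR; fun_prop

lemma cmcross (a b : R3) : cm (WithLp.toLp 2 (crossProduct a b)) = crossc (cm a) (cm b) := by
  ext i
  fin_cases i <;> simp [cm, crossc, crossProduct] <;> push_cast <;> ring

/-- real vector `(d×p)×d`. -/
def qv (p : R3) (d : S2) : R3 := WithLp.toLp 2 (crossProduct (crossProduct (d : R3) p) (d : R3))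

lemma qc_eq (p : R3) (d : S2) :
    crossc (crossc (cm (d : R3)) (cm p)) (cm (d : R3)) = cm (qv p d) := by
  rw [qv, cmcross, cmcross]

lemma hdot_eq_dotc_of_real (a : C3) (s : ℂ) (r : R3) :
    hdot a (s • cm r) = (starRingEnd ℂ) s * dotc a (cm r) := by
  simp [hdot, dotc, cm, Finset.mul_sum]
  apply Finset.sum_congr rfl; intro i _; ring

lemma dotc_cm_self (d : S2) : dotc (cm (d : R3)) (cm (d : R3)) = 1 := by
  have hd : ‖(d : R3)‖ = 1 := by
    have := d.2
    simpa [mem_sphere_iff_norm] using this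
  have : ∑ i, ((d : R3) i)^2 = 1 := by
    have h := EuclideanSpace.norm_eq (d : R3)
    rw [hd] at h
    have h2 : Real.sqrt (∑ i, ‖(d:R3) i‖^2) = 1 := h.symm
    have := Real.sqrt_eq_one.mp h2
    simpa [Real.norm_eq_abs, sq_abs] using this
  rw [dotc]
  have : ((∑ i, ((d : R3) i)^2 : ℝ) : ℂ) = 1 := by rw [this]; norm_num
  rw [← this]
  push_cast
  apply Finset.sum_congr rfl; intro i _
  simp [cm]; ring

/-- Cauchy–Schwarz for integrals of nonneg functions. -/
lemma L1_le_sqrt_L2 {α : Type} [MeasurableSpace α] (μ : Measure α) [IsFiniteMeasure μ]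
    (f : α → ℝ) (hf : MemLp f 2 μ) :
    ∫ a, f a ∂μ ≤ Real.sqrt ((μ Set.univ).toReal) * Real.sqrt (∫ a, (f a)^2 ∂μ) := by
  have hone : MemLp (fun _ : α => (1:ℝ)) 2 μ := memLp_const 1
  set u : Lp ℝ 2 μ := hf.toLp f
  set v : Lp ℝ 2 μ := hone.toLp _
  have hu : (u : α → ℝ) =ᵐ[μ] f := hf.coeFn_toLp
  have hv : (v : α → ℝ) =ᵐ[μ] (fun _ => (1:ℝ)) := hone.coeFn_toLp
  have hiuv : (inner ℝ u v : ℝ) = ∫ a, f a ∂μ := by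
    rw [L2.inner_def]
    apply integral_congr_ae
    filter_upwards [hu, hv] with a h1 h2
    simp [h1, h2]
  have hiuu : (inner ℝ u u : ℝ) = ∫ a, (f a)^2 ∂μ := by
    rw [L2.inner_def]
    apply integral_congr_ae
    filter_upwards [hu] with a h1
    simp [h1]
  have hivv : (inner ℝ v v : ℝ) = (μ Set.univ).toReal := by
    rw [L2.inner_def]
    have heq : ∫ a, (inner ℝ ((v : α → ℝ) a) ((v : α → ℝ) a) : ℝ) ∂μ = ∫ a, (1:ℝ) ∂μ := by
      apply integral_congr_ae
      filter_upwards [hv] with a h2; simp [h2]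
    rw [heq]
    simp [Measure.real]
  have cs := real_inner_le_norm u v
  have hnu : ‖u‖ = Real.sqrt (∫ a, (f a)^2 ∂μ) := by
    rw [← hiuu, real_inner_self_eq_norm_sq, Real.sqrt_sq (norm_nonneg _)]
  have hnv : ‖v‖ = Real.sqrt ((μ Set.univ).toReal) := by
    rw [← hivv, real_inner_self_eq_norm_sq, Real.sqrt_sq (norm_nonneg _)]
  rw [← hiuv]
  calc (inner ℝ u v : ℝ) ≤ ‖u‖ * ‖v‖ := cs
    _ = Real.sqrt ((μ Set.univ).toReal) * Real.sqrt (∫ a, (f a)^2 ∂μ) := by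
        rw [hnu, hnv]; ring

/-- `∫ ‖f x‖² = ‖f‖²` for `f ∈ L²`. -/
lemma norm_sq_L2 {α : Type} [MeasurableSpace α] {μ : Measure α} (f : Lp C3 2 μ) :
    ∫ x, ‖f x‖^2 ∂μ = ‖f‖^2 := by
  have h1 : (inner ℂ f f : ℂ) = ∫ x, (inner ℂ (f x) (f x) : ℂ) ∂μ := L2.inner_def f f
  have h2 : ∀ x : C3, (inner ℂ x x : ℂ) = ((‖x‖^2 : ℝ) : ℂ) := by
    intro x
    rw [inner_self_eq_norm_sq_to_K]
    norm_num
  have h3 : (inner ℂ f f : ℂ) = ((∫ x, ‖f x‖^2 ∂μ : ℝ) : ℂ) := by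
    rw [h1]
    simp_rw [h2]
    exact integral_ofReal
  have h4 : (inner ℂ f f : ℂ) = ((‖f‖^2 : ℝ) : ℂ) := by
    rw [inner_self_eq_norm_sq_to_K]
    norm_num
  have := h3.symm.trans h4
  exact_mod_cast this

end Aux

section Aux2

lemma norm_S2 (d : S2) : ‖(d : R3)‖ = 1 := by
  have := d.2; simpa [mem_sphere_iff_norm] using this

lemma qc_norm_le (p : R3) (d : S2) : ‖cm (qv p d)‖ ≤ 16 * ‖p‖ := by
  rw [← qc_eq]
  have h0 : ‖cm (d:R3)‖ = 1 := by rw [norm_cm]; exact norm_S2 d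
  have h1 := norm_crossc_le (cm (d:R3)) (cm p)
  have h2 := norm_crossc_le (crossc (cm (d:R3)) (cm p)) (cm (d:R3))
  have h3 : ‖cm p‖ = ‖p‖ := norm_cm p
  nlinarith [norm_nonneg (crossc (cm (d:R3)) (cm p)), norm_nonneg p]

/-- componentwise conjugation -/
def cjv (b : C3) : C3 := WithLp.toLp 2 (fun i => (starRingEnd ℂ) (b i))

lemma hdot_eq_dotc_cjv (a b : C3) : hdot a b = dotc (cjv b) a := by
  simp [hdot, dotc, cjv]
  apply Finset.sum_congr rfl; intro i _; ring

lemma inner_eq_conj_hdot (u v : C3) :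
    (inner ℂ u v : ℂ) = (starRingEnd ℂ) (hdot u v) := by
  simp only [PiLp.inner_apply, RCLike.inner_apply, hdot, map_sum, map_mul,
    RingHomCompTriple.comp_apply, RingHom.id_apply]
  exact Finset.sum_congr rfl fun i _ => mul_comm _ _

lemma conj_dotc_cjv (b : C3) (r : R3) :
    (starRingEnd ℂ) (dotc (cjv b) (cm r)) = dotc (cm r) b := by
  simp only [dotc, cjv, cm, map_sum, map_mul, RingHomCompTriple.comp_apply,
    RingHom.id_apply, Complex.conj_conj, Complex.conj_ofReal]
  apply Finset.sum_congr rfl; intro i _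
  ring

lemma cont_dotc : Continuous (fun ab : C3 × C3 => dotc ab.1 ab.2) := by
  unfold dotc; fun_prop

end Aux2

set_option maxHeartbeats 2000000 in
/-- **Theorem 4.5 (equivalence of OSM and DSM).** -/
theorem stmt3 (k : ℝ) (hk : 0 < k) (p : R3) (hp : p ≠ 0) (Ω : Set R3)
    (hΩmeas : MeasurableSet Ω) (hΩbdd : Bornology.IsBounded Ω) (hΩpos : 0 < volume Ω)
    (T : Lp C3 2 (volume.restrict Ω) →L[ℂ] Lp C3 2 (volume.restrict Ω))
    (c : ℝ) (hc : 0 < c)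
    (hcoer : ∀ h ∈ closure (ranHt k Ω), c * ‖h‖ ^ 2 ≤ ‖(inner ℂ (T h) h : ℂ)‖) :
    ∃ c₁ c₂ : ℝ, 0 < c₁ ∧ 0 < c₂ ∧ ∀ y : R3,
      c₁ * IOSM k Ω T p y ≤ IDSM k Ω T p y ∧
      IDSM k Ω T p y ≤ c₂ * Real.sqrt (IOSM k Ω T p y) := by
  classical
  haveI hfinΩ : IsFiniteMeasure (volume.restrict Ω) := by
    constructor
    rw [Measure.restrict_apply_univ]
    exact hΩbdd.measure_lt_top
  haveI : IsFiniteMeasure σS := by unfold σS; infer_instance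
  set S : ℝ := (σS Set.univ).toReal with hSdef
  set V : ℝ := ((volume : Measure R3) Ω).toReal with hVdef
  have hS0 : 0 ≤ S := ENNReal.toReal_nonneg
  have hV0 : 0 ≤ V := ENNReal.toReal_nonneg
  set Cq : ℝ := 16 * ‖p‖ + 1 with hCqdef
  have hCq : 0 < Cq := by positivity
  set K : ℝ := 3 * Cq * Real.sqrt V * (‖T‖ + 1) with hKdef
  have hK0 : 0 ≤ K := by positivity
  refine ⟨c / (S * K^2 + 1), Real.sqrt S + 1, by positivity, by positivity, fun y => ?_⟩
  -- notation
  set hy : Lp C3 2 (volume.restrict Ω) := toL2 (volume.restrict Ω) (herg k (phiy k p y)) with hydef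
  set Th : Lp C3 2 (volume.restrict Ω) := T hy with hThdef
  -- continuity of phiy
  have hdcont : Continuous fun d : S2 => (d : R3) := continuous_subtype_val
  have hcmcont : Continuous fun d : S2 => cm (d : R3) := cont_cm.comp hdcont
  have hqccont : Continuous fun d : S2 => cm (qv p d) := by
    have heq : (fun d : S2 => cm (qv p d)) =
        fun d : S2 => crossc (crossc (cm (d : R3)) (cm p)) (cm (d : R3)) :=
      funext fun d => (qc_eq p d).symm
    rw [heq]
    exact cont_crossc.comp
      ((cont_crossc.comp (hcmcont.prodMk continuous_const)).prodMk hcmcont)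
  have hecont : Continuous fun d : S2 =>
      Complex.exp (-(Complex.I * k * (dotR (d : R3) y))) := by
    apply Complex.continuous_exp.comp
    apply Continuous.neg
    exact continuous_const.mul
      (Complex.continuous_ofReal.comp (cont_dotR.comp (hdcont.prodMk continuous_const)))
  have hecont2 : Continuous fun d : S2 =>
      Complex.exp (Complex.I * k * (dotR (d : R3) y)) :=
    Complex.continuous_exp.comp (continuous_const.mul
      (Complex.continuous_ofReal.comp (cont_dotR.comp (hdcont.prodMk continuous_const))))
  have hφcont : Continuous (phiy k p y) := by
    unfold phiy
    apply hecont.smul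
    exact cont_crossc.comp
      ((cont_crossc.comp (hcmcont.prodMk continuous_const)).prodMk hcmcont)
  have hnorme : ∀ t : ℝ, ‖Complex.exp (-(Complex.I * t))‖ = 1 := by
    intro t; rw [Complex.norm_exp]; simp
  have hnorme' : ∀ t : ℝ, ‖Complex.exp (Complex.I * t)‖ = 1 := by
    intro t; rw [Complex.norm_exp]; simp
  have hφbd : ∀ d : S2, ‖phiy k p y d‖ ≤ Cq := by
    intro d
    rw [phiy, norm_smul, qc_eq]
    have he : ‖Complex.exp (-(Complex.I * k * (dotR (d : R3) y)))‖ = 1 := by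
      rw [show (Complex.I * (k:ℂ) * ((dotR (d : R3) y : ℝ) : ℂ)) =
        Complex.I * ((k * dotR (d : R3) y : ℝ) : ℂ) by push_cast; ring]
      exact hnorme _
    rw [he, one_mul]
    calc ‖cm (qv p d)‖ ≤ 16 * ‖p‖ := qc_norm_le p d
      _ ≤ Cq := by rw [hCqdef]; linarith
  have hφmem : MemLp (phiy k p y) 2 σS :=
    MemLp.of_bound hφcont.aestronglyMeasurable Cq (Filter.Eventually.of_forall hφbd)
  have hφtan : ∀ d : S2, dotc (cm ((d : S2) : R3)) (phiy k p y d) = 0 := by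
    intro d
    rw [phiy, dotc_smul_right, algB, mul_zero]
  -- the Herglotz function
  have hherg_bd : ∀ x : R3, ‖herg k (phiy k p y) x‖ ≤ Cq * S := by
    intro x
    rw [herg, hSdef]
    apply norm_integral_le_of_norm_le_const
    filter_upwards with d
    rw [norm_smul]
    have he : ‖Complex.exp (Complex.I * k * (dotR x (d : R3)))‖ = 1 := by
      rw [show (Complex.I * (k:ℂ) * ((dotR x (d : R3) : ℝ) : ℂ)) =
        Complex.I * ((k * dotR x (d : R3) : ℝ) : ℂ) by push_cast; ring]
      exact hnorme' _
    rw [he, one_mul]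
    exact hφbd d
  have hherg_sm : AEStronglyMeasurable (herg k (phiy k p y)) (volume.restrict Ω) := by
    have hcont : Continuous fun z : R3 × S2 =>
        Complex.exp (Complex.I * k * (dotR z.1 (z.2 : R3))) • phiy k p y z.2 := by
      apply Continuous.fun_smul
      · exact Complex.continuous_exp.comp
          (continuous_const.mul (Complex.continuous_ofReal.comp
            (cont_dotR.comp (continuous_fst.prodMk (hdcont.comp continuous_snd)))))
      · exact hφcont.comp continuous_snd
    have hsm : StronglyMeasurable (herg k (phiy k p y)) := by
      have := hcont.stronglyMeasurable.integral_prod_right' (ν := σS)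
      exact this
    exact hsm.aestronglyMeasurable
  have hmem : MemLp (herg k (phiy k p y)) 2 (volume.restrict Ω) :=
    MemLp.of_bound hherg_sm (Cq * S) (Filter.Eventually.of_forall hherg_bd)
  have hy_eq : hy = hmem.toLp _ := by rw [hydef, toL2, dif_pos hmem]
  have hy_coe : (hy : R3 → C3) =ᵐ[volume.restrict Ω] herg k (phiy k p y) := by
    rw [hy_eq]; exact hmem.coeFn_toLp
  have hyran : hy ∈ ranHt k Ω :=
    ⟨phiy k p y, hφmem, Filter.Eventually.of_forall (fun d => hφtan d), rfl⟩
  have hThn : ‖Th‖ ≤ ‖T‖ * ‖hy‖ := T.le_opNorm hy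
  have hThint : Integrable (Th : R3 → C3) (volume.restrict Ω) :=
    (Lp.memLp Th).integrable one_le_two
  -- the integrand of Fop
  have hEcont : ∀ d : S2, Continuous fun x : R3 =>
      Complex.exp (-(Complex.I * k * (dotR x (d : R3)))) := by
    intro d
    apply Complex.continuous_exp.comp
    apply Continuous.neg
    exact continuous_const.mul
      (Complex.continuous_ofReal.comp (cont_dotR.comp (continuous_id.prodMk continuous_const)))
  have hnormE : ∀ (d : S2) (x : R3),
      ‖Complex.exp (-(Complex.I * k * (dotR x (d : R3))))‖ = 1 := by
    intro d x
    rw [show (Complex.I * (k:ℂ) * ((dotR x (d : R3) : ℝ) : ℂ)) =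
      Complex.I * ((k * dotR x (d : R3) : ℝ) : ℂ) by push_cast; ring]
    exact hnorme _
  have hEint : ∀ d : S2, Integrable
      (fun x => Complex.exp (-(Complex.I * k * (dotR x (d : R3)))) • (Th : R3 → C3) x)
      (volume.restrict Ω) := by
    intro d
    apply Integrable.mono' hThint.norm
      (((hEcont d).aestronglyMeasurable).smul (Lp.aestronglyMeasurable Th))
    filter_upwards with x
    rw [Pi.smul_apply', norm_smul, hnormE d x, one_mul]
  have hFop : ∀ d : S2, Fop k Ω T (phiy k p y) d =
      crossc (crossc (cm (d : R3))
        (∫ x in Ω, Complex.exp (-(Complex.I * k * (dotR x (d : R3)))) • (Th : R3 → C3) x))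
        (cm (d : R3)) := fun d => rfl
  -- G and its basic representation
  set G : S2 → ℂ := fun d => dotc (cm p) (Fop k Ω T (phiy k p y) d) with hGdef
  have hIOSM : IOSM k Ω T p y = ∫ d : S2, ‖G d‖^2 ∂σS := rfl
  have hGeq : ∀ d : S2, G d = ∫ x in Ω,
      Complex.exp (-(Complex.I * k * (dotR x (d : R3)))) *
        dotc (cm (qv p d)) ((Th : R3 → C3) x) := by
    intro d
    simp only [hGdef]
    rw [hFop d, algA, qc_eq, dotc_integral _ _ _ (hEint d)]
    apply integral_congr_ae
    filter_upwards with x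
    rw [dotc_smul_right]
  have hqvbd : ∀ d : S2, ‖cm (qv p d)‖ ≤ Cq := by
    intro d
    calc ‖cm (qv p d)‖ ≤ 16 * ‖p‖ := qc_norm_le p d
      _ ≤ Cq := by rw [hCqdef]; linarith
  set A : ℝ := ∫ x in Ω, ‖(Th : R3 → C3) x‖ with hAdef
  have hA0 : 0 ≤ A := by rw [hAdef]; positivity
  have hA : A ≤ Real.sqrt V * ‖Th‖ := by
    have hf : MemLp (fun x => ‖(Th : R3 → C3) x‖) 2 (volume.restrict Ω) := (Lp.memLp Th).norm
    have h1 := L1_le_sqrt_L2 (volume.restrict Ω) _ hf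
    rw [Measure.restrict_apply_univ] at h1
    have h2 : ∫ x in Ω, ‖(Th : R3 → C3) x‖^2 = ‖Th‖^2 := norm_sq_L2 Th
    rw [hAdef, hVdef]
    calc (∫ x in Ω, ‖(Th : R3 → C3) x‖) ≤
        Real.sqrt ((volume Ω).toReal) * Real.sqrt (∫ x in Ω, ‖(Th : R3 → C3) x‖^2) := h1
      _ = Real.sqrt ((volume Ω).toReal) * ‖Th‖ := by
          rw [h2, Real.sqrt_sq (norm_nonneg _)]
  have hintdotc : ∀ d : S2, Integrable (fun x =>
      Complex.exp (-(Complex.I * k * (dotR x (d : R3)))) *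
        dotc (cm (qv p d)) ((Th : R3 → C3) x)) (volume.restrict Ω) := by
    intro d
    have h1 : Integrable (fun x => (dotCLM (cm (qv p d)))
        (Complex.exp (-(Complex.I * k * (dotR x (d : R3)))) • (Th : R3 → C3) x))
        (volume.restrict Ω) := (dotCLM (cm (qv p d))).integrable_comp (hEint d)
    apply h1.congr
    filter_upwards with x
    rw [dotCLM_apply, dotc_smul_right]
  have hGK : ∀ d : S2, ‖G d‖ ≤ K * ‖hy‖ := by
    intro d
    have hbd : ∀ x : R3, ‖Complex.exp (-(Complex.I * k * (dotR x (d : R3)))) *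
        dotc (cm (qv p d)) ((Th : R3 → C3) x)‖ ≤ 3 * Cq * ‖(Th : R3 → C3) x‖ := by
      intro x
      rw [norm_mul, hnormE d x, one_mul]
      calc ‖dotc (cm (qv p d)) ((Th : R3 → C3) x)‖ ≤
          3 * ‖cm (qv p d)‖ * ‖(Th : R3 → C3) x‖ := norm_dotc_le _ _
        _ ≤ 3 * Cq * ‖(Th : R3 → C3) x‖ := by
            have := hqvbd d
            nlinarith [norm_nonneg ((Th : R3 → C3) x), norm_nonneg (cm (qv p d))]
    calc ‖G d‖ ≤ ∫ x in Ω, ‖Complex.exp (-(Complex.I * k * (dotR x (d : R3)))) *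
          dotc (cm (qv p d)) ((Th : R3 → C3) x)‖ := by
          rw [hGeq d]; exact norm_integral_le_integral_norm _
      _ ≤ ∫ x in Ω, 3 * Cq * ‖(Th : R3 → C3) x‖ := by
          apply integral_mono (hintdotc d).norm (hThint.norm.const_mul _)
          intro x; exact hbd x
      _ = 3 * Cq * A := by rw [hAdef, integral_const_mul]
      _ ≤ 3 * Cq * (Real.sqrt V * ‖Th‖) := by
          apply mul_le_mul_of_nonneg_left hA (by positivity)
      _ ≤ 3 * Cq * (Real.sqrt V * ((‖T‖ + 1) * ‖hy‖)) := by
          have h1 : ‖Th‖ ≤ (‖T‖ + 1) * ‖hy‖ := by nlinarith [norm_nonneg hy, hThn]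
          have h2 : Real.sqrt V * ‖Th‖ ≤ Real.sqrt V * ((‖T‖ + 1) * ‖hy‖) :=
            mul_le_mul_of_nonneg_left h1 (Real.sqrt_nonneg V)
          exact mul_le_mul_of_nonneg_left h2 (by positivity)
      _ = K * ‖hy‖ := by rw [hKdef]; ring
  have hjointE : Continuous fun z : S2 × R3 =>
      Complex.exp (-(Complex.I * k * (dotR z.2 (z.1 : R3)))) := by
    apply Complex.continuous_exp.comp
    apply Continuous.neg
    exact continuous_const.mul (Complex.continuous_ofReal.comp
      (cont_dotR.comp (continuous_snd.prodMk (hdcont.comp continuous_fst))))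
  have hThsnd : AEStronglyMeasurable (fun z : S2 × R3 => (Th : R3 → C3) z.2)
      (σS.prod (volume.restrict Ω)) :=
    (Lp.aestronglyMeasurable Th).comp_quasiMeasurePreserving
      Measure.quasiMeasurePreserving_snd
  have hGmeas : AEStronglyMeasurable G σS := by
    have hjoint : AEStronglyMeasurable (fun z : S2 × R3 =>
        Complex.exp (-(Complex.I * k * (dotR z.2 (z.1 : R3)))) • (Th : R3 → C3) z.2)
        (σS.prod (volume.restrict Ω)) := hjointE.aestronglyMeasurable.smul hThsnd
    have hvint : AEStronglyMeasurable (fun d : S2 =>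
        ∫ x in Ω, Complex.exp (-(Complex.I * k * (dotR x (d : R3)))) • (Th : R3 → C3) x) σS :=
      hjoint.integral_prod_right'
    have hΦ : Continuous fun uv : C3 × C3 =>
        dotc (cm p) (crossc (crossc uv.1 uv.2) uv.1) :=
      cont_dotc.comp (continuous_const.prodMk (cont_crossc.comp
        ((cont_crossc.comp (continuous_fst.prodMk continuous_snd)).prodMk continuous_fst)))
    have heq : G = fun d : S2 => (fun uv : C3 × C3 => dotc (cm p) (crossc (crossc uv.1 uv.2) uv.1))
        (cm (d : R3),
          ∫ x in Ω, Complex.exp (-(Complex.I * k * (dotR x (d : R3)))) • (Th : R3 → C3) x) := by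
      funext d
      simp only [hGdef]
      rw [hFop d]
    rw [heq]
    exact hΦ.comp_aestronglyMeasurable (hcmcont.aestronglyMeasurable.prodMk hvint)
  have hG2 : MemLp G 2 σS :=
    MemLp.of_bound hGmeas (K * ‖hy‖) (Filter.Eventually.of_forall hGK)
  -- the OSM bound
  have hIOSM_nonneg : 0 ≤ IOSM k Ω T p y := by
    rw [hIOSM]; positivity
  have hIOSM_le : IOSM k Ω T p y ≤ S * (K * ‖hy‖)^2 := by
    rw [hIOSM]
    by_cases hint : Integrable (fun d => ‖G d‖^2) σS
    · calc (∫ d : S2, ‖G d‖^2 ∂σS) ≤ ∫ _d : S2, (K*‖hy‖)^2 ∂σS := by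
            apply integral_mono hint (integrable_const _)
            intro d
            exact pow_le_pow_left₀ (norm_nonneg _) (hGK d) 2
        _ = S * (K*‖hy‖)^2 := by rw [integral_const, smul_eq_mul, hSdef]; rfl
    · rw [integral_undef hint]; positivity
  -- pointwise identity for the DSM integrand
  have hpoint : ∀ d : S2, hdot (Fop k Ω T (phiy k p y) d) (phiy k p y d) =
      Complex.exp (Complex.I * k * (dotR (d : R3) y)) * G d := by
    intro d
    have hu1 : dotc (cm (d : R3)) (cm (d : R3)) = 1 := dotc_cm_self d
    have hzero : dotc (cm (d : R3)) (cm (qv p d)) = 0 := by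
      rw [← qc_eq]; exact algB _ _
    have hconj : (starRingEnd ℂ) (Complex.exp (-(Complex.I * k * (dotR (d : R3) y)))) =
        Complex.exp (Complex.I * k * (dotR (d : R3) y)) := by
      rw [← Complex.exp_conj]
      congr 1
      simp [map_mul, Complex.conj_ofReal]
    have hGd : G d = dotc (cm (qv p d))
        (∫ x in Ω, Complex.exp (-(Complex.I * k * (dotR x (d : R3)))) • (Th : R3 → C3) x) := by
      simp only [hGdef]
      rw [hFop d, algA, qc_eq]
    calc hdot (Fop k Ω T (phiy k p y) d) (phiy k p y d)
        = (starRingEnd ℂ) (Complex.exp (-(Complex.I * k * (dotR (d : R3) y)))) *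
            dotc (Fop k Ω T (phiy k p y) d) (cm (qv p d)) := by
          rw [phiy, qc_eq, hdot_eq_dotc_of_real]
      _ = Complex.exp (Complex.I * k * (dotR (d : R3) y)) *
            dotc (cm (qv p d)) (Fop k Ω T (phiy k p y) d) := by
          rw [hconj, dotc_comm]
      _ = Complex.exp (Complex.I * k * (dotR (d : R3) y)) * G d := by
          congr 1
          rw [hFop d, algA, tri, hu1, hzero, one_smul, zero_smul, sub_zero, hGd]
  have hIDSM : IDSM k Ω T p y =
      ‖∫ d : S2, Complex.exp (Complex.I * k * (dotR (d : R3) y)) * G d ∂σS‖ := by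
    rw [IDSM]
    congr 1
    exact integral_congr_ae (Filter.Eventually.of_forall hpoint)
  -- upper bound
  have hupper : IDSM k Ω T p y ≤ (Real.sqrt S + 1) * Real.sqrt (IOSM k Ω T p y) := by
    rw [hIDSM]
    have hstep2 : ∫ d : S2, ‖Complex.exp (Complex.I * k * (dotR (d : R3) y)) * G d‖ ∂σS
        = ∫ d : S2, ‖G d‖ ∂σS := by
      apply integral_congr_ae
      filter_upwards with d
      rw [norm_mul]
      rw [show (Complex.I * (k:ℂ) * ((dotR (d : R3) y : ℝ) : ℂ)) =
        Complex.I * ((k * dotR (d : R3) y : ℝ) : ℂ) by push_cast; ring]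
      rw [hnorme' _, one_mul]
    have hstep3 := L1_le_sqrt_L2 σS (fun d => ‖G d‖) hG2.norm
    calc ‖∫ d : S2, Complex.exp (Complex.I * k * (dotR (d : R3) y)) * G d ∂σS‖
        ≤ ∫ d : S2, ‖Complex.exp (Complex.I * k * (dotR (d : R3) y)) * G d‖ ∂σS :=
          norm_integral_le_integral_norm _
      _ = ∫ d : S2, ‖G d‖ ∂σS := hstep2
      _ ≤ Real.sqrt S * Real.sqrt (∫ d : S2, ‖G d‖^2 ∂σS) := by
          rw [hSdef]; exact hstep3
      _ = Real.sqrt S * Real.sqrt (IOSM k Ω T p y) := by rw [← hIOSM]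
      _ ≤ (Real.sqrt S + 1) * Real.sqrt (IOSM k Ω T p y) := by
          have := Real.sqrt_nonneg (IOSM k Ω T p y)
          nlinarith
  -- the Fubini identity
  have hJ : (∫ d : S2, Complex.exp (Complex.I * k * (dotR (d : R3) y)) * G d ∂σS)
      = (inner ℂ hy Th : ℂ) := by
    set F : S2 → R3 → ℂ := fun d x =>
      Complex.exp (Complex.I * k * (dotR (d : R3) y)) *
        (Complex.exp (-(Complex.I * k * (dotR x (d : R3)))) *
          dotc (cm (qv p d)) ((Th : R3 → C3) x)) with hFdef
    have h1 : ∀ d : S2, Complex.exp (Complex.I * k * (dotR (d : R3) y)) * G d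
        = ∫ x in Ω, F d x := by
      intro d
      rw [hGeq d, ← smul_eq_mul, ← integral_smul]
      apply integral_congr_ae
      filter_upwards with x
      simp only [hFdef, smul_eq_mul]
    have hFaesm : AEStronglyMeasurable (Function.uncurry F) (σS.prod (volume.restrict Ω)) := by
      have hc1 : Continuous fun z : S2 × R3 =>
          Complex.exp (Complex.I * k * (dotR (z.1 : R3) y)) :=
        hecont2.comp continuous_fst
      have hdm : AEStronglyMeasurable (fun z : S2 × R3 =>
          (fun ab : C3 × C3 => dotc ab.1 ab.2) (cm (qv p z.1), (Th : R3 → C3) z.2))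
          (σS.prod (volume.restrict Ω)) :=
        cont_dotc.comp_aestronglyMeasurable
          (((hqccont.comp continuous_fst).aestronglyMeasurable).prodMk hThsnd)
      have huncurry : Function.uncurry F = fun z : S2 × R3 =>
          Complex.exp (Complex.I * k * (dotR (z.1 : R3) y)) *
            (Complex.exp (-(Complex.I * k * (dotR z.2 (z.1 : R3)))) *
              (fun ab : C3 × C3 => dotc ab.1 ab.2) (cm (qv p z.1), (Th : R3 → C3) z.2)) := rfl
      rw [huncurry]
      exact hc1.aestronglyMeasurable.mul (hjointE.aestronglyMeasurable.mul hdm)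
    have hg : Integrable ((fun x : R3 => 3 * Cq * ‖(Th : R3 → C3) x‖) ∘ Prod.snd)
        (σS.prod (volume.restrict Ω)) := by
      have hg1 : Integrable (fun x : R3 => 3 * Cq * ‖(Th : R3 → C3) x‖) (volume.restrict Ω) :=
        hThint.norm.const_mul _
      have hg2 : Integrable (fun x : R3 => 3 * Cq * ‖(Th : R3 → C3) x‖)
          ((σS Set.univ) • (volume.restrict Ω)) := hg1.smul_measure (measure_ne_top _ _)
      have hmap : Measure.map Prod.snd (σS.prod (volume.restrict Ω)) =
          (σS Set.univ) • (volume.restrict Ω) := Measure.map_snd_prod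
      rw [← hmap] at hg2
      exact (integrable_map_measure hg2.aestronglyMeasurable
        measurable_snd.aemeasurable).mp hg2
    have hFint : Integrable (Function.uncurry F) (σS.prod (volume.restrict Ω)) := by
      apply Integrable.mono' hg hFaesm
      filter_upwards with z
      rcases z with ⟨d, x⟩
      simp only [Function.uncurry, hFdef, Function.comp]
      rw [norm_mul, norm_mul]
      rw [show (Complex.I * (k:ℂ) * ((dotR (d : R3) y : ℝ) : ℂ)) =
        Complex.I * ((k * dotR (d : R3) y : ℝ) : ℂ) by push_cast; ring]
      rw [hnorme' _, one_mul, hnormE d x, one_mul]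
      calc ‖dotc (cm (qv p d)) ((Th : R3 → C3) x)‖ ≤
          3 * ‖cm (qv p d)‖ * ‖(Th : R3 → C3) x‖ := norm_dotc_le _ _
        _ ≤ 3 * Cq * ‖(Th : R3 → C3) x‖ := by
            have := hqvbd d
            nlinarith [norm_nonneg ((Th : R3 → C3) x), norm_nonneg (cm (qv p d))]
    have h2 : (∫ d : S2, ∫ x in Ω, F d x ∂volume ∂σS)
        = ∫ x in Ω, ∫ d : S2, F d x ∂σS := integral_integral_swap hFint
    have h3 : ∀ x : R3, (∫ d : S2, F d x ∂σS)
        = (inner ℂ (herg k (phiy k p y) x) ((Th : R3 → C3) x) : ℂ) := by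
      intro x
      have hwcont : Continuous fun d : S2 =>
          Complex.exp (Complex.I * k * (dotR x (d : R3))) • phiy k p y d := by
        apply Continuous.fun_smul
        · exact Complex.continuous_exp.comp
            (continuous_const.mul (Complex.continuous_ofReal.comp
              (cont_dotR.comp (continuous_const.prodMk hdcont))))
        · exact hφcont
      have hwint : Integrable (fun d : S2 =>
          Complex.exp (Complex.I * k * (dotR x (d : R3))) • phiy k p y d) σS := by
        apply memLp_one_iff_integrable.mp
        apply MemLp.of_bound hwcont.aestronglyMeasurable Cq
        filter_upwards with d
        rw [norm_smul]
        rw [show (Complex.I * (k:ℂ) * ((dotR x (d : R3) : ℝ) : ℂ)) =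
          Complex.I * ((k * dotR x (d : R3) : ℝ) : ℂ) by push_cast; ring]
        rw [hnorme' _, one_mul]
        exact hφbd d
      rw [inner_eq_conj_hdot, hdot_eq_dotc_cjv, herg,
        dotc_integral _ _ _ hwint, ← integral_conj]
      apply integral_congr_ae
      filter_upwards with d
      rw [phiy, qc_eq, dotc_smul_right, dotc_smul_right, map_mul, map_mul, conj_dotc_cjv]
      have hc1 : (starRingEnd ℂ) (Complex.exp (Complex.I * k * (dotR x (d : R3)))) =
          Complex.exp (-(Complex.I * k * (dotR x (d : R3)))) := by
        rw [← Complex.exp_conj]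
        congr 1
        simp [map_mul, Complex.conj_ofReal]
      have hc2 : (starRingEnd ℂ) (Complex.exp (-(Complex.I * k * (dotR (d : R3) y)))) =
          Complex.exp (Complex.I * k * (dotR (d : R3) y)) := by
        rw [← Complex.exp_conj]
        congr 1
        simp [map_mul, Complex.conj_ofReal]
      rw [hc1, hc2]
      simp only [hFdef]
      ring
    have h4 : (inner ℂ hy Th : ℂ) = ∫ x in Ω,
        (inner ℂ (herg k (phiy k p y) x) ((Th : R3 → C3) x) : ℂ) := by
      rw [L2.inner_def]
      apply integral_congr_ae
      filter_upwards [hy_coe] with x hx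
      rw [hx]
    calc (∫ d : S2, Complex.exp (Complex.I * k * (dotR (d : R3) y)) * G d ∂σS)
        = ∫ d : S2, ∫ x in Ω, F d x ∂volume ∂σS := by
          apply integral_congr_ae
          filter_upwards with d
          exact h1 d
      _ = ∫ x in Ω, ∫ d : S2, F d x ∂σS := h2
      _ = ∫ x in Ω, (inner ℂ (herg k (phiy k p y) x) ((Th : R3 → C3) x) : ℂ) := by
          apply integral_congr_ae
          filter_upwards with x
          exact h3 x
      _ = (inner ℂ hy Th : ℂ) := h4.symm
  have hlow : c * ‖hy‖^2 ≤ IDSM k Ω T p y := by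
    rw [hIDSM, hJ]
    have hns : ‖(inner ℂ hy Th : ℂ)‖ = ‖(inner ℂ Th hy : ℂ)‖ := by
      rw [← inner_conj_symm]
      exact norm_star _
    rw [hns, hThdef]
    exact hcoer hy (subset_closure hyran)
  constructor
  · -- c₁ bound
    have h1 : IOSM k Ω T p y ≤ S * K^2 * ‖hy‖^2 := by nlinarith [hIOSM_le]
    have h2 : 0 < S * K^2 + 1 := by positivity
    rw [div_mul_eq_mul_div, div_le_iff₀ h2]
    calc c * IOSM k Ω T p y ≤ c * (S * K^2 * ‖hy‖^2) :=
          mul_le_mul_of_nonneg_left h1 (le_of_lt hc)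
      _ ≤ (c * ‖hy‖^2) * (S * K^2 + 1) := by
          nlinarith [norm_nonneg hy, sq_nonneg ‖hy‖, hS0, hK0, sq_nonneg K, hc.le]
      _ ≤ IDSM k Ω T p y * (S * K^2 + 1) :=
          mul_le_mul_of_nonneg_right hlow (le_of_lt h2)
  · exact hupper
end
end

section
/- (Theorem 3.2(a), injectivity of the Herglotz operator) Let k > 0, let g ∈ L²(S²,ℂ³), and let U ⊂ ℝ³ be a nonempty open set. If ∫_{S²} g(d) e^{ik x·d} dσ(d) = 0 for every x ∈ U, then g = 0 σ-almost everywhere on S². -/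
open MeasureTheory Metric Complex

noncomputable section

-- ===================== auxiliary material =====================

open scoped RealInnerProductSpace Pointwise

instance inst_s8 : IsFiniteMeasure σS := by unfold σS; infer_instance

lemma dotR_eq_inner (a b : R3) : dotR a b = ⟪a, b⟫ := by
  simp [dotR, PiLp.inner_apply, RCLike.inner_apply, mul_comm]

lemma dotR_add_left (a b c : R3) : dotR (a + b) c = dotR a c + dotR b c := by
  simp [dotR_eq_inner, inner_add_left]

lemma dotR_smul_left (t : ℝ) (a c : R3) : dotR (t • a) c = t * dotR a c := by
  simp [dotR, Finset.mul_sum, mul_assoc]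

lemma dotR_sub_right (a b c : R3) : dotR a (b - c) = dotR a b - dotR a c := by
  simp [dotR_eq_inner, inner_sub_right]

lemma dotR_neg_left (a c : R3) : dotR (-a) c = -dotR a c := by
  simp [dotR_eq_inner, inner_neg_left]

lemma dotR_zero_left (c : R3) : dotR 0 c = 0 := by simp [dotR]

lemma abs_dotR_le (a : R3) (d : S2) : |dotR a (d : R3)| ≤ ‖a‖ := by
  rw [dotR_eq_inner]
  calc |⟪a, (d:R3)⟫| ≤ ‖a‖ * ‖(d:R3)‖ := abs_real_inner_le_norm a d
  _ = ‖a‖ := by rw [norm_eq_of_mem_sphere d, mul_one]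

lemma dotR_continuous (a : R3) : Continuous (fun d : S2 => dotR a (d : R3)) := by
  simp only [dotR_eq_inner]
  exact Continuous.inner continuous_const continuous_subtype_val

/-- Integrability of a continuous scalar multiple of an integrable function on `S²`. -/
lemma integrable_cont_smul {φ : S2 → ℂ} (hφ : Continuous φ) {g : S2 → C3}
    (hgi : Integrable g σS) : Integrable (fun d => φ d • g d) σS := by
  obtain ⟨C, hC⟩ := (isCompact_range hφ).isBounded.exists_norm_le
  exact hgi.smul_of_top_right (memLp_top_of_bound hφ.aestronglyMeasurable C
    (Filter.Eventually.of_forall fun d => hC _ ⟨d, rfl⟩))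

/-- Step 1: the Herglotz wave function vanishes everywhere. -/
lemma herg_zero_everywhere (k : ℝ) (hk : 0 < k) (g : S2 → C3) (hg : MemLp g 2 σS)
    (U : Set R3) (hU : IsOpen U) (hUne : U.Nonempty)
    (hvanish : ∀ x ∈ U, herg k g x = 0) : ∀ x : R3, herg k g x = 0 := by
  have hgi : Integrable g σS := hg.integrable one_le_two
  obtain ⟨x₀, hx₀⟩ := hUne
  obtain ⟨ε, hε, hball⟩ := Metric.isOpen_iff.1 hU x₀ hx₀
  intro x
  rcases eq_or_ne x x₀ with rfl | hxx
  · exact hvanish _ hx₀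
  set v : R3 := x - x₀ with hv
  have hvne : v ≠ 0 := sub_ne_zero.2 hxx
  have hvpos : 0 < ‖v‖ := norm_pos_iff.2 hvne
  set c : S2 → ℂ := fun d => Complex.I * k * ((dotR x₀ (d : R3) : ℝ) : ℂ) with hcdef
  set m : S2 → ℂ := fun d => Complex.I * k * ((dotR v (d : R3) : ℝ) : ℂ) with hmdef
  have hc : Continuous c := continuous_const.mul (Complex.continuous_ofReal.comp (dotR_continuous x₀))
  have hm : Continuous m := continuous_const.mul (Complex.continuous_ofReal.comp (dotR_continuous v))
  have hmabs : ∀ d : S2, ‖m d‖ ≤ k * ‖v‖ := by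
    intro d
    have h0 : ‖m d‖ = k * |dotR v (d : R3)| := by
      simp [hmdef, map_mul,
        abs_of_pos hk]
    rw [h0]
    have := abs_dotR_le v d
    nlinarith
  have hre : ∀ (z : ℂ) (d : S2), (c d + m d * z).re = -(k * dotR v (d : R3) * z.im) := by
    intro z d
    simp [hcdef, hmdef, Complex.add_re, Complex.mul_re, Complex.mul_im]
  have hexpbd : ∀ (z : ℂ) (d : S2), ‖Complex.exp (c d + m d * z)‖ ≤
      Real.exp (k * ‖v‖ * |z.im|) := by
    intro z d
    rw [Complex.norm_exp]
    apply Real.exp_le_exp.2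
    rw [hre]
    calc -(k * dotR v (d : R3) * z.im) ≤ |k * dotR v (d : R3) * z.im| := neg_le_abs _
    _ = k * |dotR v (d : R3)| * |z.im| := by rw [abs_mul, abs_mul, abs_of_pos hk]
    _ ≤ k * ‖v‖ * |z.im| := by
        have h3 := abs_dotR_le v d
        have h4 : k * |dotR v (d : R3)| ≤ k * ‖v‖ := mul_le_mul_of_nonneg_left h3 hk.le
        exact mul_le_mul_of_nonneg_right h4 (abs_nonneg _)
  set F : ℂ → C3 := fun z => ∫ d, Complex.exp (c d + m d * z) • g d ∂σS with hF
  have meas : ∀ z : ℂ, AEStronglyMeasurable (fun d : S2 => Complex.exp (c d + m d * z) • g d) σS := by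
    intro z
    exact ((Complex.continuous_exp.comp (hc.add (hm.mul continuous_const))).aestronglyMeasurable).smul
      hg.aestronglyMeasurable
  have intF : ∀ z : ℂ, Integrable (fun d : S2 => Complex.exp (c d + m d * z) • g d) σS := by
    intro z
    refine ((hgi.norm.const_mul (Real.exp (k * ‖v‖ * |z.im|))).mono' (meas z) ?_)
    filter_upwards with d
    rw [norm_smul]
    exact mul_le_mul_of_nonneg_right (hexpbd z d) (norm_nonneg _)
  have key : ∀ z₀ : ℂ, HasDerivAt F (∫ d, (Complex.exp (c d + m d * z₀) * m d) • g d ∂σS) z₀ := by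
    intro z₀
    set bound : S2 → ℝ := fun d => (k * ‖v‖) * Real.exp (k * ‖v‖ * (‖z₀‖ + 1)) * ‖g d‖ with hbdef
    have h := hasDerivAt_integral_of_dominated_loc_of_deriv_le
      (F := fun (z : ℂ) (d : S2) => Complex.exp (c d + m d * z) • g d)
      (F' := fun (z : ℂ) (d : S2) => (Complex.exp (c d + m d * z) * m d) • g d)
      (bound := bound) (Metric.ball_mem_nhds z₀ zero_lt_one)
      (Filter.Eventually.of_forall meas) (intF z₀)
      ((((Complex.continuous_exp.comp (hc.add (hm.mul continuous_const))).mul hm).aestronglyMeasurable).smul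
        hg.aestronglyMeasurable)
      ?_ (hgi.norm.const_mul _) ?_
    · exact h.2
    · filter_upwards with d
      intro z hz
      have him : |z.im| ≤ ‖z₀‖ + 1 := by
        have h1 : |z.im| ≤ ‖z‖ := Complex.abs_im_le_norm z
        have h2 : ‖z‖ - ‖z₀‖ ≤ ‖z - z₀‖ := norm_sub_norm_le z z₀
        have h3 : ‖z - z₀‖ ≤ 1 := le_of_lt (mem_ball_iff_norm.1 hz)
        linarith
      have hb1 : ‖Complex.exp (c d + m d * z)‖ ≤ Real.exp (k * ‖v‖ * (‖z₀‖ + 1)) := by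
        refine (hexpbd z d).trans (Real.exp_le_exp.2 ?_)
        have hkv : (0:ℝ) ≤ k * ‖v‖ := by positivity
        calc k * ‖v‖ * |z.im| ≤ k * ‖v‖ * (‖z₀‖ + 1) := mul_le_mul_of_nonneg_left him hkv
        _ = k * ‖v‖ * (‖z₀‖ + 1) := rfl
      rw [norm_smul, norm_mul]
      have hm1 := hmabs d
      have hg1 : (0:ℝ) ≤ ‖g d‖ := norm_nonneg _
      have he2 : (0:ℝ) ≤ Real.exp (k * ‖v‖ * (‖z₀‖ + 1)) := (Real.exp_pos _).le
      have hm0 : (0:ℝ) ≤ ‖m d‖ := norm_nonneg _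
      calc ‖Complex.exp (c d + m d * z)‖ * ‖m d‖ * ‖g d‖
          ≤ Real.exp (k * ‖v‖ * (‖z₀‖ + 1)) * (k * ‖v‖) * ‖g d‖ :=
            mul_le_mul_of_nonneg_right (mul_le_mul hb1 hm1 hm0 he2) hg1
      _ = bound d := by rw [hbdef]; ring
    · filter_upwards with d
      intro z hz
      have h1 : HasDerivAt (fun z : ℂ => c d + m d * z) (m d) z := by
        simpa using ((hasDerivAt_id z).const_mul (m d)).const_add (c d)
      exact h1.cexp.smul_const (g d)
  have hFdiff : Differentiable ℂ F := fun z => (key z).differentiableAt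
  have hFa : AnalyticOnNhd ℂ F Set.univ :=
    hFdiff.differentiableOn.analyticOnNhd isOpen_univ
  have hFt : ∀ t : ℝ, F (t : ℂ) = herg k g (x₀ + t • v) := by
    intro t
    unfold herg
    refine integral_congr_ae (Filter.Eventually.of_forall fun d => ?_)
    dsimp only
    congr 1
    have hd : dotR (x₀ + t • v) (d : R3) = dotR x₀ (d : R3) + t * dotR v (d : R3) := by
      rw [dotR_add_left, dotR_smul_left]
    simp only [hcdef, hmdef]
    rw [hd]
    push_cast
    ring
  set δ : ℝ := min (ε / ‖v‖) 1 with hδ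
  have hδpos : 0 < δ := lt_min (div_pos hε hvpos) one_pos
  have hzero : ∀ n : ℕ, F ((δ / (n + 2) : ℝ) : ℂ) = 0 := by
    intro n
    set t : ℝ := δ / (n + 2) with ht
    have htpos : 0 < t := by positivity
    have htle : t < ε / ‖v‖ := by
      have h1 : t ≤ δ / 2 := by
        rw [ht]
        apply div_le_div_of_nonneg_left hδpos.le two_pos  -- may need fixing
        push_cast; linarith
      have h2 : δ / 2 < δ := by linarith
      have h3 : δ ≤ ε / ‖v‖ := min_le_left _ _
      linarith
    have hmem : x₀ + t • v ∈ U := by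
      apply hball
      rw [mem_ball_iff_norm]
      have harr : x₀ + t • v - x₀ = t • v := by abel
      rw [harr, norm_smul, Real.norm_eq_abs, abs_of_pos htpos]
      calc t * ‖v‖ < (ε / ‖v‖) * ‖v‖ := mul_lt_mul_of_pos_right htle hvpos
      _ = ε := by field_simp
    rw [hFt]
    exact hvanish _ hmem
  have hfreq : ∃ᶠ z in nhdsWithin (0:ℂ) {z | z ≠ 0}, F z = 0 := by
    have hseq : Filter.Tendsto (fun n : ℕ => ((δ / (n + 2) : ℝ) : ℂ)) Filter.atTop
        (nhdsWithin (0:ℂ) {z | z ≠ 0}) := by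
      apply tendsto_nhdsWithin_of_tendsto_nhds_of_eventually_within
      · have hr : Filter.Tendsto (fun n : ℕ => (δ / (n + 2) : ℝ)) Filter.atTop (nhds 0) := by
          apply Filter.Tendsto.div_atTop (tendsto_const_nhds)
          exact Filter.tendsto_atTop_add_const_right _ 2 tendsto_natCast_atTop_atTop
        have h2 : Filter.Tendsto (fun n : ℕ => ((δ / (n + 2) : ℝ) : ℂ)) Filter.atTop
            (nhds (((0:ℝ) : ℂ))) := (Complex.continuous_ofReal.tendsto 0).comp hr
        simpa using h2
      · filter_upwards with n
        have htpos : (0:ℝ) < δ / (n + 2) := by positivity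
        simp only [Set.mem_setOf_eq, ne_eq, Complex.ofReal_eq_zero]
        exact ne_of_gt htpos
    exact hseq.frequently (Filter.Frequently.of_forall hzero)
  have hEq : Set.EqOn F 0 Set.univ :=
    hFa.eqOn_zero_of_preconnected_of_frequently_eq_zero isPreconnected_univ
      (Set.mem_univ (0:ℂ)) hfreq
  have h1 : F ((1:ℝ) : ℂ) = 0 := hEq (Set.mem_univ _)
  rw [hFt 1] at h1
  simpa [hv] using h1

/-- Step 2: the integrals against all continuous functions vanish. -/
lemma integral_cont_smul_zero (k : ℝ) (hk : 0 < k) (g : S2 → C3) (hg : MemLp g 2 σS)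
    (hzero : ∀ x : R3, herg k g x = 0) :
    ∀ φ : C(S2, ℂ), (∫ d, φ d • g d ∂σS) = 0 := by
  have hgi : Integrable g σS := hg.integrable one_le_two
  set χ : R3 → C(S2, ℂ) := fun y =>
    ⟨fun d => Complex.exp (Complex.I * ((dotR y (d : R3) : ℝ) : ℂ)),
      Complex.continuous_exp.comp (continuous_const.mul
        (Complex.continuous_ofReal.comp (dotR_continuous y)))⟩ with hχ
  have hχapp : ∀ y d, χ y d = Complex.exp (Complex.I * ((dotR y (d : R3) : ℝ) : ℂ)) :=
    fun y d => rfl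
  have hχ0 : ∀ y : R3, (∫ d, χ y d • g d ∂σS) = 0 := by
    intro y
    have h1 := hzero (k⁻¹ • y)
    unfold herg at h1
    rw [← h1]
    refine integral_congr_ae (Filter.Eventually.of_forall fun d => ?_)
    dsimp only
    rw [hχapp, dotR_smul_left]
    congr 2
    push_cast
    have hkne : (k : ℂ) ≠ 0 := Complex.ofReal_ne_zero.2 (ne_of_gt hk)
    field_simp
    try ring
  have hχmul : ∀ y z : R3, χ y * χ z = χ (y + z) := by
    intro y z
    ext d
    rw [ContinuousMap.mul_apply, hχapp, hχapp, hχapp, ← Complex.exp_add]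
    congr 1
    rw [dotR_add_left]
    push_cast
    ring
  have hχstar : ∀ y : R3, star (χ y) = χ (-y) := by
    intro y
    ext d
    rw [ContinuousMap.star_apply, hχapp, hχapp, Complex.star_def, ← Complex.exp_conj]
    congr 1
    rw [dotR_neg_left]
    simp only [map_mul, Complex.conj_I, Complex.conj_ofReal]
    push_cast
    ring
  have hχzero : χ 0 = 1 := by
    ext d
    simp [hχapp, dotR_zero_left]
  set S : Set C(S2, ℂ) := Set.range χ with hS
  set M : Submodule ℂ C(S2, ℂ) := Submodule.span ℂ S with hM
  have hSM : ∀ a ∈ StarAlgebra.adjoin ℂ S, a ∈ M := by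
    intro a ha
    induction ha using StarAlgebra.adjoin_induction with
    | mem x hx => exact Submodule.subset_span hx
    | algebraMap r =>
        have h1 : (algebraMap ℂ C(S2, ℂ)) r = r • χ 0 := by
          rw [hχzero, Algebra.algebraMap_eq_smul_one]
        rw [h1]
        exact M.smul_mem r (Submodule.subset_span ⟨0, rfl⟩)
    | add x y hx hy ihx ihy => exact M.add_mem ihx ihy
    | mul x y hx hy ihx ihy =>
        have hSS : S * S ⊆ S := by
          rintro _ ⟨_, ⟨y, rfl⟩, _, ⟨z, rfl⟩, rfl⟩
          exact ⟨y + z, (hχmul y z).symm⟩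
        have h1 := Submodule.mul_mem_mul ihx ihy
        rw [Submodule.span_mul_span] at h1
        exact Submodule.span_le.2 (hSS.trans Submodule.subset_span) h1
    | star x hx ihx =>
        refine Submodule.span_induction (p := fun a _ => star a ∈ M) ?_ ?_ ?_ ?_ ihx
        · rintro _ ⟨w, rfl⟩
          rw [hχstar]
          exact Submodule.subset_span ⟨-w, rfl⟩
        · simpa using M.zero_mem
        · intro a b _ _ ha hb
          rw [star_add]
          exact M.add_mem ha hb
        · intro r a _ ha
          rw [star_smul]
          exact M.smul_mem _ ha
  have hsep : (StarAlgebra.adjoin ℂ S).SeparatesPoints := by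
    intro d₁ d₂ hne
    have hwne : (d₁ : R3) - (d₂ : R3) ≠ 0 := sub_ne_zero.2 (Subtype.coe_injective.ne hne)
    set w : R3 := (d₁ : R3) - (d₂ : R3) with hw
    have hwpos : (0:ℝ) < ‖w‖ ^ 2 := pow_pos (norm_pos_iff.2 hwne) 2
    set y₀ : R3 := (Real.pi / ‖w‖ ^ 2) • w with hy₀
    refine ⟨_, ⟨χ y₀, StarAlgebra.subset_adjoin ℂ S ⟨y₀, rfl⟩, rfl⟩, ?_⟩
    have hdiff : dotR y₀ (d₁ : R3) - dotR y₀ (d₂ : R3) = Real.pi := by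
      rw [← dotR_sub_right, ← hw, hy₀, dotR_smul_left, dotR_eq_inner,
        real_inner_self_eq_norm_sq]
      field_simp
    show (χ y₀) d₁ ≠ (χ y₀) d₂
    rw [hχapp, hχapp]
    intro hcontra
    have hexp : Complex.exp (Complex.I * ((dotR y₀ (d₁ : R3) : ℝ) : ℂ) -
        Complex.I * ((dotR y₀ (d₂ : R3) : ℝ) : ℂ)) = 1 := by
      rw [Complex.exp_sub, hcontra, div_self (Complex.exp_ne_zero _)]
    rw [Complex.exp_eq_one_iff] at hexp
    obtain ⟨n, hn⟩ := hexp
    have hn2 : ((Real.pi : ℂ)) * Complex.I = (n : ℂ) * (2 * Real.pi * Complex.I) := by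
      rw [← hn, ← hdiff]
      push_cast
      ring
    have hIcancel : (Real.pi : ℂ) * Complex.I = ((n : ℂ) * (2 * Real.pi)) * Complex.I := by
      rw [hn2]; ring
    have hn3 : ((Real.pi : ℂ)) = (n : ℂ) * (2 * Real.pi) :=
      mul_right_cancel₀ Complex.I_ne_zero hIcancel
    have hn4 : (Real.pi : ℝ) = (n : ℝ) * (2 * Real.pi) := by exact_mod_cast hn3
    have hpi := Real.pi_pos
    have h2n : (2 * n : ℝ) = 1 := by
      field_simp at hn4
      nlinarith
    have h2n' : (2 * n : ℤ) = 1 := by exact_mod_cast h2n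
    omega
  have hSW := ContinuousMap.starSubalgebra_topologicalClosure_eq_top_of_separatesPoints
    (StarAlgebra.adjoin ℂ S) hsep
  -- the functional
  set L : C(S2, ℂ) → C3 := fun φ => ∫ d, φ d • g d ∂σS with hL
  have hLlip : LipschitzWith ⟨∫ d, ‖g d‖ ∂σS, integral_nonneg fun d => norm_nonneg _⟩ L := by
    apply LipschitzWith.of_dist_le_mul
    intro φ ψ
    rw [dist_eq_norm, hL]
    have hint : (∫ d, φ d • g d ∂σS) - (∫ d, ψ d • g d ∂σS)
        = ∫ d, (φ d - ψ d) • g d ∂σS := by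
      rw [← integral_sub (integrable_cont_smul φ.continuous hgi)
        (integrable_cont_smul ψ.continuous hgi)]
      refine integral_congr_ae (Filter.Eventually.of_forall fun d => ?_)
      dsimp only
      rw [sub_smul]
    rw [hint]
    calc ‖∫ d, (φ d - ψ d) • g d ∂σS‖ ≤ ∫ d, ‖(φ d - ψ d) • g d‖ ∂σS :=
          norm_integral_le_integral_norm _
    _ ≤ ∫ d, dist φ ψ * ‖g d‖ ∂σS := by
        refine integral_mono_of_nonneg (Filter.Eventually.of_forall fun d => norm_nonneg _)
          (hgi.norm.const_mul _) (Filter.Eventually.of_forall fun d => ?_)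
        dsimp only
        rw [norm_smul]
        refine mul_le_mul_of_nonneg_right ?_ (norm_nonneg _)
        have := ContinuousMap.dist_apply_le_dist (f := φ) (g := ψ) d
        rwa [dist_eq_norm] at this
    _ = (∫ d, ‖g d‖ ∂σS) * dist φ ψ := by rw [integral_const_mul]; ring
  have hLzeroM : ∀ φ ∈ M, L φ = 0 := by
    intro φ hφ
    refine Submodule.span_induction (p := fun φ _ => L φ = 0) ?_ ?_ ?_ ?_ hφ
    · rintro _ ⟨y, rfl⟩
      exact hχ0 y
    · simp [hL]
    · intro a b _ _ ha hb
      have : L (a + b) = L a + L b := by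
        rw [hL]
        simp only [ContinuousMap.add_apply]
        rw [← integral_add (integrable_cont_smul a.continuous hgi)
          (integrable_cont_smul b.continuous hgi)]
        refine integral_congr_ae (Filter.Eventually.of_forall fun d => ?_)
        dsimp only
        rw [add_smul]
      rw [this, ha, hb, add_zero]
    · intro r a _ ha
      have : L (r • a) = r • L a := by
        rw [hL]
        simp only [ContinuousMap.smul_apply]
        rw [← integral_smul]
        refine integral_congr_ae (Filter.Eventually.of_forall fun d => ?_)
        dsimp only
        simp [smul_eq_mul, mul_smul]
      rw [this, ha, smul_zero]
  intro φ
  have hdense : Dense ((StarAlgebra.adjoin ℂ S : StarSubalgebra ℂ C(S2, ℂ)) : Set C(S2, ℂ)) := by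
    have h1 := congrArg (fun (B : StarSubalgebra ℂ C(S2, ℂ)) => (B : Set C(S2, ℂ))) hSW
    simp only [StarSubalgebra.topologicalClosure_coe, StarSubalgebra.coe_top] at h1
    rw [dense_iff_closure_eq]
    exact h1
  have hclosed : IsClosed {φ : C(S2, ℂ) | L φ = 0} :=
    isClosed_eq hLlip.continuous continuous_const
  have hsub : ((StarAlgebra.adjoin ℂ S : StarSubalgebra ℂ C(S2, ℂ)) : Set C(S2, ℂ))
      ⊆ {φ : C(S2, ℂ) | L φ = 0} := fun a ha => hLzeroM a (hSM a ha)
  have huniv : (Set.univ : Set C(S2, ℂ)) ⊆ {φ : C(S2, ℂ) | L φ = 0} := by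
    rw [← hdense.closure_eq]
    exact closure_minimal hsub hclosed
  exact huniv (Set.mem_univ φ)

/-- Step 3: conclude `g = 0` a.e. via `L²` duality. -/
lemma ae_zero_of_integral_cont_zero (g : S2 → C3) (hg : MemLp g 2 σS)
    (hall : ∀ φ : C(S2, ℂ), (∫ d, φ d • g d ∂σS) = 0) : g =ᵐ[σS] 0 := by
  have hgi : Integrable g σS := hg.integrable one_le_two
  set G : Lp C3 2 σS := hg.toLp g with hG
  have hinner : ∀ ψ : C(S2, C3), (inner (𝕜 := ℂ) ((ContinuousMap.toLp 2 σS ℂ) ψ) G : ℂ) = 0 := by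
    intro ψ
    have h1 : (inner (𝕜 := ℂ) ((ContinuousMap.toLp 2 σS ℂ) ψ) G : ℂ)
        = ∫ d, (inner (𝕜 := ℂ) (ψ d) (g d) : ℂ) ∂σS := by
      rw [MeasureTheory.L2.inner_def]
      apply integral_congr_ae
      filter_upwards [ContinuousMap.coeFn_toLp (p := 2) (μ := σS) (𝕜 := ℂ) ψ,
        hg.coeFn_toLp] with d hd1 hd2
      rw [hd1, hd2]
    rw [h1]
    have h2 : ∀ d : S2, (inner (𝕜 := ℂ) (ψ d) (g d) : ℂ)
        = ∑ i : Fin 3, (starRingEnd ℂ) (ψ d i) * g d i := by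
      intro d
      rw [PiLp.inner_apply]
      simp only [RCLike.inner_apply']
    rw [integral_congr_ae (Filter.Eventually.of_forall h2)]
    have hcont : ∀ i : Fin 3, Continuous fun d : S2 => (starRingEnd ℂ) (ψ d i) := by
      intro i
      exact Complex.continuous_conj.comp ((EuclideanSpace.proj (𝕜 := ℂ) i).continuous.comp
        ψ.continuous)
    have hgint : ∀ i : Fin 3, Integrable (fun d : S2 => g d i) σS := by
      intro i
      exact (EuclideanSpace.proj (𝕜 := ℂ) i).integrable_comp hgi
    have hterm : ∀ i : Fin 3, Integrable (fun d : S2 => (starRingEnd ℂ) (ψ d i) * g d i) σS := by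
      intro i
      obtain ⟨C, hC⟩ := (isCompact_range (hcont i)).isBounded.exists_norm_le
      exact (hgint i).bdd_mul (hcont i).aestronglyMeasurable (Filter.Eventually.of_forall fun d => hC _ ⟨d, rfl⟩)
    rw [integral_finset_sum _ (fun i _ => hterm i)]
    refine Finset.sum_eq_zero fun i _ => ?_
    set φi : C(S2, ℂ) := ⟨fun d => (starRingEnd ℂ) (ψ d i), hcont i⟩ with hφi
    have h3 := hall φi
    have h4 : (EuclideanSpace.proj (𝕜 := ℂ) i) (∫ d, φi d • g d ∂σS)
        = ∫ d, (EuclideanSpace.proj (𝕜 := ℂ) i) (φi d • g d) ∂σS :=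
      ((EuclideanSpace.proj (𝕜 := ℂ) i).integral_comp_comm
        (integrable_cont_smul φi.continuous hgi)).symm
    rw [h3, map_zero] at h4
    have h5 : ∀ d : S2, (EuclideanSpace.proj (𝕜 := ℂ) i) (φi d • g d)
        = (starRingEnd ℂ) (ψ d i) * g d i := by
      intro d
      simp [hφi, PiLp.proj_apply, PiLp.smul_apply, smul_eq_mul]
    rw [integral_congr_ae (Filter.Eventually.of_forall h5)] at h4
    exact h4.symm
  have hdr : DenseRange ((ContinuousMap.toLp 2 σS ℂ) : C(S2, C3) →L[ℂ] Lp C3 2 σS) :=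
    ContinuousMap.toLp_denseRange C3 σS ℂ (by norm_num)
  have hclosed : IsClosed {f : Lp C3 2 σS | (inner (𝕜 := ℂ) f G : ℂ) = 0} :=
    isClosed_eq (Continuous.inner continuous_id continuous_const) continuous_const
  have hsub : Set.range ((ContinuousMap.toLp 2 σS ℂ) : C(S2, C3) →L[ℂ] Lp C3 2 σS)
      ⊆ {f : Lp C3 2 σS | (inner (𝕜 := ℂ) f G : ℂ) = 0} := by
    rintro _ ⟨ψ, rfl⟩
    exact hinner ψ
  have huniv : (Set.univ : Set (Lp C3 2 σS)) ⊆ {f | (inner (𝕜 := ℂ) f G : ℂ) = 0} := by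
    rw [← hdr.closure_range]
    exact closure_minimal hsub hclosed
  have hGzero : (inner (𝕜 := ℂ) G G : ℂ) = 0 := huniv (Set.mem_univ G)
  have hG0 : G = 0 := inner_self_eq_zero.1 hGzero
  have h6 : g =ᵐ[σS] ⇑G := (hg.coeFn_toLp).symm
  refine h6.trans ?_
  rw [hG0]
  exact MeasureTheory.Lp.coeFn_zero C3 2 σS



/-- **Theorem 3.2(a), injectivity of the Herglotz operator.** -/
theorem stmt8 (k : ℝ) (hk : 0 < k) (g : S2 → C3) (hg : MemLp g 2 σS)
    (U : Set R3) (hU : IsOpen U) (hUne : U.Nonempty)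
    (hvanish : ∀ x ∈ U, herg k g x = 0) :
    g =ᵐ[σS] 0 :=
  ae_zero_of_integral_cont_zero g hg
    (integral_cont_smul_zero k hk g hg (herg_zero_everywhere k hk g hg U hU hUne hvanish))
end
end
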